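/- Let ξ be a principal eigenvector (eigenvector corresponding to the largest-in-absolute-value eigenvalue) of a nonzero symmetric real matrix M. Then for any nonzero vector η, the angle satisfies ∠(η, Mη) ≤ 3·∠(η, ξ). -/
import Mathlib

open Matrix

/-- The (absolute) angle between two vectors of `ℝ^p`:
`arccos (|⟨x,y⟩| / (‖x‖·‖y‖))`, with norms given by the Euclidean norm. -/
noncomputable def vecAngle {p : ℕ} (x y : Fin p → ℝ) : ℝ :=
  Real.arccos (|x ⬝ᵥ y| / (Real.sqrt (x ⬝ᵥ x) * Real.sqrt (y ⬝ᵥ y)))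

namespace StmtAux

variable {p : ℕ}

noncomputable def toE (x : Fin p → ℝ) : EuclideanSpace ℝ (Fin p) :=
  (WithLp.equiv 2 _).symm x

lemma inner_toE (x y : Fin p → ℝ) : inner (𝕜 := ℝ) (toE x) (toE y) = x ⬝ᵥ y := by
  simp [toE, PiLp.inner_apply, RCLike.inner_apply, dotProduct, mul_comm]

lemma norm_toE (x : Fin p → ℝ) : ‖toE x‖ = Real.sqrt (x ⬝ᵥ x) := by
  rw [← inner_toE, real_inner_self_eq_norm_mul_norm, Real.sqrt_mul_self (norm_nonneg _)]

lemma vecAngle_eq (x y : Fin p → ℝ) :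
    vecAngle x y = Real.arccos (|x ⬝ᵥ y| / (‖toE x‖ * ‖toE y‖)) := by
  rw [vecAngle, norm_toE, norm_toE]

lemma parseval (b : OrthonormalBasis (Fin p) ℝ (EuclideanSpace ℝ (Fin p)))
    (x : EuclideanSpace ℝ (Fin p)) :
    ‖x‖ ^ 2 = ∑ i, (inner (𝕜 := ℝ) (b i) x) ^ 2 := by
  rw [← real_inner_self_eq_norm_sq, ← b.sum_inner_mul_inner x x]
  congr 1; ext i; rw [real_inner_comm x (b i), sq]

lemma opBound (M : Matrix (Fin p) (Fin p) ℝ) (hMsymm : Mᵀ = M) (hM : M.IsHermitian) (μ : ℝ)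
    (hp : ∀ lam (v : Fin p → ℝ), v ≠ 0 → M *ᵥ v = lam • v → |lam| ≤ |μ|)
    (v : Fin p → ℝ) : ‖toE (M *ᵥ v)‖ ≤ |μ| * ‖toE v‖ := by
  set b := hM.eigenvectorBasis with hb
  have hev : ∀ i, |hM.eigenvalues i| ≤ |μ| := by
    intro i
    refine hp _ _ ?_ (hM.mulVec_eigenvectorBasis i)
    intro h0
    have : b i = 0 := by ext j; exact congrFun h0 j
    exact b.toBasis.ne_zero i (by simpa using this)
  have key : ∀ i, inner (𝕜 := ℝ) (b i) (toE (M *ᵥ v))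
      = hM.eigenvalues i * inner (𝕜 := ℝ) (b i) (toE v) := by
    intro i
    have h1 : inner (𝕜 := ℝ) (b i) (toE (M *ᵥ v)) = (⇑(b i)) ⬝ᵥ (M *ᵥ v) :=
      inner_toE (⇑(b i)) (M *ᵥ v)
    have h2 : (⇑(b i)) ⬝ᵥ (M *ᵥ v) = (M *ᵥ ⇑(b i)) ⬝ᵥ v := by
      rw [dotProduct_mulVec, ← mulVec_transpose, hMsymm]
    rw [h1, h2, hM.mulVec_eigenvectorBasis i, smul_dotProduct, ← inner_toE]
    rfl
  have hsq : ‖toE (M *ᵥ v)‖ ^ 2 ≤ (|μ| * ‖toE v‖) ^ 2 := by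
    rw [parseval b, mul_pow, parseval b (toE v), Finset.mul_sum]
    apply Finset.sum_le_sum
    intro i _
    rw [key i, mul_pow]
    have : (hM.eigenvalues i) ^ 2 ≤ |μ| ^ 2 := by
      rw [← sq_abs (hM.eigenvalues i)]
      exact pow_le_pow_left₀ (abs_nonneg _) (hev i) 2
    nlinarith [sq_nonneg (inner (𝕜 := ℝ) (b i) (toE v))]
  nlinarith [norm_nonneg (toE (M *ᵥ v)), norm_nonneg (toE v), abs_nonneg μ,
    mul_nonneg (abs_nonneg μ) (norm_nonneg (toE v))]

lemma vecAngle_comm (x y : Fin p → ℝ) : vecAngle x y = vecAngle y x := by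
  rw [vecAngle, vecAngle, dotProduct_comm, mul_comm]

lemma vecAngle_smul_left (a : ℝ) (ha : a ≠ 0) (x y : Fin p → ℝ) :
    vecAngle (a • x) y = vecAngle x y := by
  unfold vecAngle
  simp only [smul_dotProduct, dotProduct_smul, smul_eq_mul, abs_mul]
  rw [show a * (a * (x ⬝ᵥ x)) = a ^ 2 * (x ⬝ᵥ x) by ring,
    Real.sqrt_mul (sq_nonneg a), Real.sqrt_sq_eq_abs,
    mul_assoc |a| (Real.sqrt _) (Real.sqrt _), mul_div_mul_left _ _ (abs_ne_zero.mpr ha)]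

lemma vecAngle_smul_right (a : ℝ) (ha : a ≠ 0) (x y : Fin p → ℝ) :
    vecAngle x (a • y) = vecAngle x y := by
  rw [vecAngle_comm, vecAngle_smul_left a ha, vecAngle_comm]

lemma arccos_antitone : Antitone Real.arccos := by
  intro x y h
  rw [Real.arccos_eq_pi_div_two_sub_arcsin, Real.arccos_eq_pi_div_two_sub_arcsin]
  exact sub_le_sub_left (Real.monotone_arcsin h) _

end StmtAux

open StmtAux

theorem stmt_1 {p : ℕ} (M : Matrix (Fin p) (Fin p) ℝ)
    (hMsymm : Mᵀ = M) (hM0 : M ≠ 0)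
    (ξ : Fin p → ℝ) (μ : ℝ) (hξ0 : ξ ≠ 0) (hξ : M.mulVec ξ = μ • ξ)
    (hprincipal : ∀ (lam : ℝ) (v : Fin p → ℝ), v ≠ 0 → M.mulVec v = lam • v → |lam| ≤ |μ|)
    (η : Fin p → ℝ) (hη : η ≠ 0) :
    vecAngle η (M.mulVec η) ≤ 3 * vecAngle η ξ := by
  have hMH : M.IsHermitian := by
    ext i j
    simpa [Matrix.conjTranspose_apply] using congrFun (congrFun hMsymm i) j
  -- μ ≠ 0
  have hμ : μ ≠ 0 := by
    intro h0
    apply hM0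
    have hz : ∀ v : Fin p → ℝ, M *ᵥ v = 0 := by
      intro v
      have hb := opBound M hMsymm hMH μ hprincipal v
      rw [h0, abs_zero, zero_mul] at hb
      have hn : toE (M *ᵥ v) = 0 := norm_le_zero_iff.mp hb
      exact (WithLp.equiv 2 _).symm.injective hn
    ext i j
    simpa using congrFun (hz (Pi.single j 1)) i
  -- normalization
  have hηE : toE η ≠ 0 := fun h => hη ((WithLp.equiv 2 _).symm.injective h)
  have hξE : toE ξ ≠ 0 := fun h => hξ0 ((WithLp.equiv 2 _).symm.injective h)
  have hnη : (0:ℝ) < ‖toE η‖ := norm_pos_iff.mpr hηE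
  have hnξ : (0:ℝ) < ‖toE ξ‖ := norm_pos_iff.mpr hξE
  obtain ⟨η', hη'def⟩ : ∃ v : Fin p → ℝ, v = ‖toE η‖⁻¹ • η := ⟨_, rfl⟩
  obtain ⟨ξ', hξ'def⟩ : ∃ v : Fin p → ℝ, v = ‖toE ξ‖⁻¹ • ξ := ⟨_, rfl⟩
  have hinvη : (‖toE η‖⁻¹ : ℝ) ≠ 0 := inv_ne_zero hnη.ne'
  have hinvξ : (‖toE ξ‖⁻¹ : ℝ) ≠ 0 := inv_ne_zero hnξ.ne'
  have hnormη' : ‖toE η'‖ = 1 := by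
    have : toE η' = ‖toE η‖⁻¹ • toE η := by rw [hη'def]; rfl
    rw [this, norm_smul, norm_inv, norm_norm, inv_mul_cancel₀ hnη.ne']
  have hnormξ' : ‖toE ξ'‖ = 1 := by
    have : toE ξ' = ‖toE ξ‖⁻¹ • toE ξ := by rw [hξ'def]; rfl
    rw [this, norm_smul, norm_inv, norm_norm, inv_mul_cancel₀ hnξ.ne']
  have hMξ' : M *ᵥ ξ' = μ • ξ' := by
    rw [hξ'def, mulVec_smul, hξ, smul_comm]
  have hgoal1 : vecAngle η (M *ᵥ η) = vecAngle η' (M *ᵥ η') := by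
    rw [hη'def, mulVec_smul, vecAngle_smul_left _ hinvη, vecAngle_smul_right _ hinvη]
  have hgoal2 : vecAngle η ξ = vecAngle η' ξ' := by
    rw [hη'def, hξ'def, vecAngle_smul_left _ hinvη, vecAngle_smul_right _ hinvξ]
  rw [hgoal1, hgoal2]
  -- dot products of unit vectors
  have hηη : η' ⬝ᵥ η' = 1 := by
    rw [← inner_toE, real_inner_self_eq_norm_sq, hnormη']; norm_num
  have hξξ : ξ' ⬝ᵥ ξ' = 1 := by
    rw [← inner_toE, real_inner_self_eq_norm_sq, hnormξ']; norm_num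
  obtain ⟨c, hcdef⟩ : ∃ t : ℝ, t = η' ⬝ᵥ ξ' := ⟨_, rfl⟩
  have hface : vecAngle η' ξ' = Real.arccos |c| := by
    rw [vecAngle_eq, hnormη', hnormξ', ← hcdef]; norm_num
  have hc1 : |c| ≤ 1 := by
    have h := abs_real_inner_le_norm (toE η') (toE ξ')
    rw [inner_toE, hnormη', hnormξ', ← hcdef] at h
    simpa using h
  have hθ0 : 0 ≤ Real.arccos |c| := Real.arccos_nonneg _
  -- the left side is at most π/2
  have hLHSle : vecAngle η' (M *ᵥ η') ≤ Real.pi / 2 := by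
    rw [vecAngle]
    refine (Real.arccos_le_pi_div_two).mpr ?_
    positivity
  rcases le_or_gt |c| (Real.sqrt 3 / 2) with hc | hc
  · -- big angle case : trivial
    have h6 : Real.pi / 6 ≤ Real.arccos |c| := by
      have : Real.arccos (Real.sqrt 3 / 2) ≤ Real.arccos |c| := arccos_antitone hc
      rwa [← Real.cos_pi_div_six,
        Real.arccos_cos (by positivity) (by linarith [Real.pi_nonneg])] at this
    rw [hface]
    linarith
  · -- small angle case
    have h3 : (Real.sqrt 3 / 2) ^ 2 = 3 / 4 := by
      rw [div_pow, Real.sq_sqrt (by norm_num : (0:ℝ) ≤ 3)]; norm_num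
    have hc2 : (1:ℝ) / 2 < 2 * c ^ 2 - 1 := by
      have : (3:ℝ)/4 < c ^ 2 := by
        calc (3:ℝ)/4 = (Real.sqrt 3 / 2)^2 := h3.symm
        _ < |c| ^ 2 := by
            apply pow_lt_pow_left₀ hc (by positivity) (by norm_num)
        _ = c ^ 2 := sq_abs c
      linarith
    obtain ⟨w, hwdef⟩ : ∃ v : Fin p → ℝ, v = η' - c • ξ' := ⟨_, rfl⟩
    have sa : ∀ x y : Fin p → ℝ, (M *ᵥ x) ⬝ᵥ y = x ⬝ᵥ (M *ᵥ y) := by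
      intro x y
      rw [dotProduct_mulVec, ← mulVec_transpose, hMsymm]
    have hwξ : w ⬝ᵥ ξ' = 0 := by
      simp only [hwdef, sub_dotProduct, smul_dotProduct, smul_eq_mul, hξξ, ← hcdef]
      ring
    have hξw : ξ' ⬝ᵥ w = 0 := by rw [dotProduct_comm]; exact hwξ
    have hww : w ⬝ᵥ w = 1 - c ^ 2 := by
      simp only [hwdef, sub_dotProduct, dotProduct_sub, smul_dotProduct, dotProduct_smul,
        smul_eq_mul, hηη, hξξ, dotProduct_comm ξ' η', ← hcdef]
      ring
    have hdecomp : η' = c • ξ' + w := by rw [hwdef]; abel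
    have hMwξ : (M *ᵥ w) ⬝ᵥ ξ' = 0 := by
      rw [sa, hMξ']
      simp only [dotProduct_smul, smul_eq_mul, hwξ, mul_zero]
    have hξMw : ξ' ⬝ᵥ (M *ᵥ w) = 0 := by rw [dotProduct_comm]; exact hMwξ
    have hinner : η' ⬝ᵥ (M *ᵥ η') = μ * c ^ 2 + w ⬝ᵥ (M *ᵥ w) := by
      conv_lhs => rw [hdecomp]
      rw [mulVec_add, mulVec_smul, hMξ']
      simp only [add_dotProduct, dotProduct_add, smul_dotProduct, dotProduct_smul,
        smul_eq_mul, hξξ, hwξ, hξMw]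
      ring
    -- norms of w and Mw
    have hww' : ‖toE w‖ ^ 2 = 1 - c ^ 2 := by
      rw [← real_inner_self_eq_norm_sq, inner_toE, hww]
    have hMwbound : ‖toE (M *ᵥ w)‖ ≤ |μ| * ‖toE w‖ :=
      opBound M hMsymm hMH μ hprincipal w
    have hMww : |w ⬝ᵥ (M *ᵥ w)| ≤ |μ| * (1 - c ^ 2) := by
      calc |w ⬝ᵥ (M *ᵥ w)| = |inner (𝕜 := ℝ) (toE w) (toE (M *ᵥ w))| := by rw [inner_toE]
        _ ≤ ‖toE w‖ * ‖toE (M *ᵥ w)‖ := abs_real_inner_le_norm _ _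
        _ ≤ ‖toE w‖ * (|μ| * ‖toE w‖) := by
            exact mul_le_mul_of_nonneg_left hMwbound (norm_nonneg _)
        _ = |μ| * ‖toE w‖ ^ 2 := by ring
        _ = |μ| * (1 - c ^ 2) := by rw [hww']
    have hlow : |μ| * (2 * c ^ 2 - 1) ≤ |η' ⬝ᵥ (M *ᵥ η')| := by
      rw [hinner]
      have h1 := abs_sub_abs_le_abs_sub (μ * c ^ 2) (-(w ⬝ᵥ (M *ᵥ w)))
      rw [abs_neg, sub_neg_eq_add] at h1
      rw [abs_mul, abs_pow, sq_abs] at h1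
      nlinarith [abs_nonneg μ]
    have hMηbound : ‖toE (M *ᵥ η')‖ ≤ |μ| := by
      have := opBound M hMsymm hMH μ hprincipal η'
      rwa [hnormη', mul_one] at this
    have hCS : |η' ⬝ᵥ (M *ᵥ η')| ≤ ‖toE (M *ᵥ η')‖ := by
      have := abs_real_inner_le_norm (toE η') (toE (M *ᵥ η'))
      rwa [inner_toE, hnormη', one_mul] at this
    have hμpos : 0 < |μ| := abs_pos.mpr hμ
    have hMηpos : 0 < ‖toE (M *ᵥ η')‖ := by
      have : 0 < |μ| * (2 * c ^ 2 - 1) := by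
        apply mul_pos hμpos; linarith
      linarith [hlow.trans hCS]
    have hratio : 2 * c ^ 2 - 1 ≤ |η' ⬝ᵥ (M *ᵥ η')| / (‖toE η'‖ * ‖toE (M *ᵥ η')‖) := by
      rw [hnormη', one_mul, le_div_iff₀ hMηpos]
      calc (2 * c ^ 2 - 1) * ‖toE (M *ᵥ η')‖ ≤ (2 * c ^ 2 - 1) * |μ| := by
            apply mul_le_mul_of_nonneg_left hMηbound; linarith
        _ = |μ| * (2 * c ^ 2 - 1) := by ring
        _ ≤ _ := hlow
    have hstep : vecAngle η' (M *ᵥ η') ≤ Real.arccos (2 * c ^ 2 - 1) := by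
      rw [vecAngle_eq]
      exact arccos_antitone hratio
    have hdouble : Real.arccos (2 * c ^ 2 - 1) = 2 * Real.arccos |c| := by
      have hcos : Real.cos (2 * Real.arccos |c|) = 2 * c ^ 2 - 1 := by
        rw [Real.cos_two_mul, Real.cos_arccos (by linarith [abs_nonneg c]) hc1, sq_abs]
      rw [← hcos, Real.arccos_cos (by positivity) ?_]
      have : Real.arccos |c| ≤ Real.pi / 2 := Real.arccos_le_pi_div_two.mpr (abs_nonneg c)
      linarith
    rw [hface]
    calc vecAngle η' (M *ᵥ η') ≤ Real.arccos (2 * c ^ 2 - 1) := hstep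
      _ = 2 * Real.arccos |c| := hdouble
      _ ≤ 3 * Real.arccos |c| := by linarith
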